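/- Let A be the algebra over ℂ(q) generated by x, y with relation x y = q^b y x for some integer b, where the Cartan matrix entry a satisfies b = d·a. Then x and y satisfy the quantum Serre relation: ∑_{k=0}^{1-a} (-1)^k [1-a choose k]_{q^d} x^{1-a-k} y x^k = 0. -/
import Mathlib


/-- The symmetric p-binomial coefficient
`[n choose k]_p = ∏_{j=1}^{k} (p^{n-j+1}-p^{-(n-j+1)})/(p^j - p^{-j})`. -/
noncomputable def qbinom (p : ℂ) (n k : ℕ) : ℂ :=
  ∏ j ∈ Finset.range k,
    (p ^ ((n : ℤ) - j) - p ^ (-((n : ℤ) - j))) /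
      (p ^ ((j : ℤ) + 1) - p ^ (-((j : ℤ) + 1)))

lemma qbinom_zero (p : ℂ) (n : ℕ) : qbinom p n 0 = 1 := by simp [qbinom]

lemma qbinom_succ (p : ℂ) (n k : ℕ) :
    qbinom p n (k + 1) = qbinom p n k *
      ((p ^ ((n : ℤ) - k) - p ^ (-((n : ℤ) - k))) /
        (p ^ ((k : ℤ) + 1) - p ^ (-((k : ℤ) + 1)))) :=
  Finset.prod_range_succ _ _

lemma qbinom_top (p : ℂ) (n : ℕ) : qbinom p n (n + 1) = 0 := by
  apply Finset.prod_eq_zero (Finset.self_mem_range_succ n)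
  simp

lemma qbinom_shift (p : ℂ) (n k : ℕ) :
    qbinom p (n + 1) (k + 1) = qbinom p n k *
      ((p ^ ((n : ℤ) + 1) - p ^ (-((n : ℤ) + 1))) /
        (p ^ ((k : ℤ) + 1) - p ^ (-((k : ℤ) + 1)))) := by
  induction k with
  | zero =>
    simp only [qbinom_succ, qbinom_zero, one_mul]
    norm_num
  | succ k ih =>
    rw [qbinom_succ, ih, qbinom_succ]
    push_cast
    have e1 : ((n : ℤ) + 1 - (k + 1)) = (n : ℤ) - k := by ring
    rw [e1]
    ring
lemma den_ne (p : ℂ) (hp : p ≠ 0) (H : ∀ m : ℕ, 1 ≤ m → p ^ (2 * m) ≠ 1) (k : ℕ) :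
    p ^ ((k : ℤ) + 1) - p ^ (-((k : ℤ) + 1)) ≠ 0 := by
  intro h
  apply H (k + 1) (by omega)
  have h' : p ^ ((k : ℤ) + 1) = p ^ (-((k : ℤ) + 1)) := sub_eq_zero.mp h
  have : p ^ ((k : ℤ) + 1) * p ^ ((k : ℤ) + 1) = 1 := by
    nth_rewrite 2 [h']
    rw [← zpow_add₀ hp, show ((k:ℤ) + 1 + -((k:ℤ) + 1)) = 0 from by ring, zpow_zero]
  calc p ^ (2 * (k + 1)) = p ^ (((2 * (k + 1) : ℕ) : ℤ)) := (zpow_natCast p _).symm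
    _ = p ^ ((k : ℤ) + 1) * p ^ ((k : ℤ) + 1) := by
        rw [← zpow_add₀ hp]; congr 1; push_cast; ring
    _ = 1 := this

lemma qbinom_pascal (p : ℂ) (hp : p ≠ 0)
    (H : ∀ m : ℕ, 1 ≤ m → p ^ (2 * m) ≠ 1) (n k : ℕ) :
    qbinom p (n + 1) (k + 1) =
      p ^ (-((k : ℤ) + 1)) * qbinom p n (k + 1) + p ^ ((n : ℤ) - k) * qbinom p n k := by
  rw [qbinom_shift, qbinom_succ]
  have hd := den_ne p hp H k
  set D : ℂ := p ^ ((k : ℤ) + 1) - p ^ (-((k : ℤ) + 1)) with hD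
  have key : p ^ (-((k : ℤ) + 1)) * (p ^ ((n : ℤ) - k) - p ^ (-((n : ℤ) - k)))
      + p ^ ((n : ℤ) - k) * D = p ^ ((n : ℤ) + 1) - p ^ (-((n : ℤ) + 1)) := by
    rw [hD]
    have hadd : ∀ s t : ℤ, p ^ s * p ^ t = p ^ (s + t) := fun s t => (zpow_add₀ hp s t).symm
    simp only [mul_sub, hadd]
    rw [show (-((k : ℤ) + 1) + ((n : ℤ) - k)) = (n : ℤ) - 2*k - 1 from by ring,
      show (-((k : ℤ) + 1) + -((n : ℤ) - k)) = -((n : ℤ) + 1) from by ring,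
      show (((n : ℤ) - k) + ((k : ℤ) + 1)) = (n : ℤ) + 1 from by ring,
      show (((n : ℤ) - k) + -((k : ℤ) + 1)) = (n : ℤ) - 2*k - 1 from by ring]
    ring
  rw [← key, add_div, mul_div_cancel_right₀ _ hd]
  ring

noncomputable def qS (p : ℂ) (n : ℕ) : ℂ :=
  ∑ k ∈ Finset.range (n + 1), (-1 : ℂ) ^ k * p ^ ((k : ℤ) * ((n : ℤ) - 1)) * qbinom p n k

lemma qS_succ (p : ℂ) (hp : p ≠ 0) (H : ∀ m : ℕ, 1 ≤ m → p ^ (2 * m) ≠ 1) (n : ℕ) :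
    qS p (n + 1) = (1 - p ^ ((2 * (n : ℤ)))) * qS p n := by
  have hadd : ∀ s t : ℤ, p ^ s * p ^ t = p ^ (s + t) := fun s t => (zpow_add₀ hp s t).symm
  set F : ℕ → ℂ := fun j => (-1 : ℂ) ^ j * p ^ ((j : ℤ) * ((n : ℤ) - 1)) * qbinom p n j with hF
  have hterm : ∀ k : ℕ,
      (-1 : ℂ) ^ (k + 1) * p ^ (((k : ℤ) + 1) * (((n : ℤ) + 1) - 1)) * qbinom p (n + 1) (k + 1)
      = F (k + 1) + (- p ^ ((2 * (n : ℤ)))) * F k := by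
    intro k
    rw [qbinom_pascal p hp H n k]
    have e1 : p ^ (((k : ℤ) + 1) * (((n : ℤ) + 1) - 1)) * p ^ (-((k : ℤ) + 1))
        = p ^ (((k : ℤ) + 1) * ((n : ℤ) - 1)) := by
      rw [hadd]; congr 1; ring
    have e2 : p ^ (((k : ℤ) + 1) * (((n : ℤ) + 1) - 1)) * p ^ ((n : ℤ) - k)
        = p ^ ((2 * (n : ℤ))) * p ^ ((k : ℤ) * ((n : ℤ) - 1)) := by
      rw [hadd, hadd]; congr 1; ring
    simp only [hF]
    push_cast
    linear_combination ((-1 : ℂ) ^ (k + 1) * qbinom p n (k + 1)) * e1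
      + ((-1 : ℂ) ^ (k + 1) * qbinom p n k) * e2
  have step1 : qS p (n + 1)
      = ∑ k ∈ Finset.range (n + 1), (F (k + 1) + (- p ^ ((2 * (n : ℤ)))) * F k) + 1 := by
    rw [qS, Finset.sum_range_succ']
    congr 1
    · apply Finset.sum_congr rfl
      intro k _
      rw [← hterm k]
      push_cast
      ring_nf
    · simp [qbinom_zero]
  rw [step1, Finset.sum_add_distrib, ← Finset.mul_sum]
  have hF0 : F 0 = 1 := by simp [hF, qbinom_zero]
  have htop : F (n + 1) = 0 := by simp [hF, qbinom_top]
  have : ∑ k ∈ Finset.range (n + 1), F (k + 1) + 1 = qS p n := by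
    rw [← hF0, ← Finset.sum_range_succ', Finset.sum_range_succ, htop, add_zero]
    rfl
  have hqs : qS p n = ∑ k ∈ Finset.range (n + 1), F k := rfl
  rw [← hqs] at *
  linear_combination this

lemma qS_one (p : ℂ) (hp : p ≠ 0) (H : ∀ m : ℕ, 1 ≤ m → p ^ (2 * m) ≠ 1) :
    qS p 1 = 0 := by
  have h1 : qbinom p 1 1 = 1 := by
    rw [qbinom_succ, qbinom_zero, one_mul]
    push_cast
    exact div_self (den_ne p hp H 0)
  simp [qS, Finset.sum_range_succ, h1, qbinom_zero]

lemma qS_eq_zero (p : ℂ) (hp : p ≠ 0) (H : ∀ m : ℕ, 1 ≤ m → p ^ (2 * m) ≠ 1)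
    (n : ℕ) (hn : 1 ≤ n) : qS p n = 0 := by
  induction n with
  | zero => omega
  | succ m ih =>
    rcases Nat.eq_or_lt_of_le hn with h | h
    · have hm : m = 0 := by omega
      subst hm
      exact qS_one p hp H
    · rw [qS_succ p hp H m, ih (by omega), mul_zero]

/-- Proposition 3.1: in an algebra where `x y = q^{b} y x` with `b = d·a`
(`a ≤ 0` an off-diagonal Cartan matrix entry, `d ∈ {1,2,3}`), the elements
`x`, `y` satisfy the quantum Serre relation
`∑_{k=0}^{1-a} (-1)^k [1-a choose k]_{q^d} x^{1-a-k} y x^k = 0`. -/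
theorem statement1 (A : Type*) [Ring A] [Algebra ℂ A]
    (q : ℂ) (hq : q ≠ 0)
    (d : ℕ) (hd : d = 1 ∨ d = 2 ∨ d = 3)
    (hroot : ∀ n : ℕ, 1 ≤ n → (q ^ d) ^ (2 * n) ≠ 1)
    (a : ℤ) (ha : a ≤ 0) (b : ℤ) (hb : b = d * a)
    (x y : A) (hxy : x * y = (q ^ b) • (y * x)) :
    ∑ k ∈ Finset.range ((1 - a).toNat + 1),
      ((-1 : ℂ) ^ k * qbinom (q ^ d) (1 - a).toNat k) •
        (x ^ ((1 - a).toNat - k) * y * x ^ k) = 0 := by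
  set n : ℕ := (1 - a).toNat with hn
  have hn1 : 1 ≤ n := by omega
  have hna : (n : ℤ) = 1 - a := by omega
  set p : ℂ := q ^ d with hpdef
  have hp : p ≠ 0 := pow_ne_zero d hq
  have hyx : y * x = (q ^ (-b)) • (x * y) := by
    rw [hxy, smul_smul, ← zpow_add₀ hq, show (-b + b) = 0 from by ring, zpow_zero, one_smul]
  have hyxk : ∀ k : ℕ, y * x ^ k = (q ^ (-(b * k))) • (x ^ k * y) := by
    intro k
    induction k with
    | zero => simp
    | succ k ih =>
      rw [pow_succ, ← mul_assoc, ih, smul_mul_assoc, mul_assoc, hyx, mul_smul_comm,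
        smul_smul, ← zpow_add₀ hq, ← mul_assoc, ← pow_succ]
      congr 2
      push_cast
      ring
  have hsummand : ∀ k ∈ Finset.range (n + 1),
      x ^ (n - k) * y * x ^ k = (q ^ (-(b * k))) • (x ^ n * y) := by
    intro k hk
    rw [mul_assoc, hyxk k, mul_smul_comm, ← mul_assoc, ← pow_add,
      Nat.sub_add_cancel (Nat.lt_succ_iff.mp (Finset.mem_range.mp hk))]
  have hscal : ∀ k : ℕ, (q ^ (-(b * (k : ℤ)))) = p ^ ((k : ℤ) * ((n : ℤ) - 1)) := by
    intro k
    rw [hpdef, ← zpow_natCast q d, ← zpow_mul]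
    congr 1
    rw [hb]
    have : (n : ℤ) - 1 = -a := by omega
    rw [this]
    ring
  calc ∑ k ∈ Finset.range (n + 1),
        ((-1 : ℂ) ^ k * qbinom p n k) • (x ^ (n - k) * y * x ^ k)
      = ∑ k ∈ Finset.range (n + 1),
        ((-1 : ℂ) ^ k * p ^ ((k : ℤ) * ((n : ℤ) - 1)) * qbinom p n k) • (x ^ n * y) := by
        apply Finset.sum_congr rfl
        intro k hk
        rw [hsummand k hk, smul_smul, hscal k]
        ring_nf
    _ = (qS p n) • (x ^ n * y) := by rw [qS, Finset.sum_smul]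
    _ = 0 := by rw [qS_eq_zero p hp hroot n hn1, zero_smul]
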